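/- For H < -1 and each fixed such H, the limit as C → C_1⁺ (where C_1 = 2(H + sqrt(H^2-1))) of K(C,H) = ∫_0^T r(s)λ(s)/(r(s)^2 - 1) ds equals -π·sqrt(2 - 2H/sqrt(H^2-1)), and this limiting value b_2(H) = -π·sqrt(2 - 2H/sqrt(H^2-1)) satisfies b_2(H) < -2π for all H < -1. -/

import Mathlib

open Real Filter
open Topology

/-- The explicit profile function `f` from the hyperbolic rotational construction. -/
noncomputable def profileF (H C : ℝ) (t : ℝ) : ℝ :=
  Real.sqrt ((C - 2 * H + Real.sqrt (4 + C ^ 2 - 4 * C * H) *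
      Real.sin (2 * Real.sqrt (H ^ 2 - 1) * t)) / (2 * H ^ 2 - 2))

noncomputable def profileR (H C : ℝ) (t : ℝ) : ℝ := profileF H C t / Real.sqrt (-C)

noncomputable def profileLam (H C : ℝ) (t : ℝ) : ℝ := H + (profileF H C t) ^ (-2 : ℤ)

/-- `K(C,H)`: the integral of `rλ/(r²-1)` over one period `T = π/√(H²-1)`. -/
noncomputable def Kint (H C : ℝ) : ℝ :=
  ∫ s in (0 : ℝ)..(π / Real.sqrt (H ^ 2 - 1)),
    profileR H C s * profileLam H C s / ((profileR H C s) ^ 2 - 1)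

noncomputable def auxN (H C t : ℝ) : ℝ :=
  (C - 2 * H + Real.sqrt (4 + C ^ 2 - 4 * C * H) *
      Real.sin (2 * Real.sqrt (H ^ 2 - 1) * t)) / (2 * H ^ 2 - 2)

noncomputable def auxPhi (H C : ℝ) : ℝ :=
  (C - 2 * H - Real.sqrt (4 + C ^ 2 - 4 * C * H)) / (2 * H ^ 2 - 2)

lemma profileF_eq (H C t : ℝ) : profileF H C t = Real.sqrt (auxN H C t) := rfl

lemma zpow_neg_two' (x : ℝ) : x ^ (-2 : ℤ) = (x ^ 2)⁻¹ := by
  rw [zpow_neg, zpow_two, sq]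

lemma auxN_cont (H : ℝ) : Continuous fun p : ℝ × ℝ => auxN H p.1 p.2 := by
  unfold auxN; fun_prop

lemma auxPhi_cont (H : ℝ) : Continuous (auxPhi H) := by
  unfold auxPhi; fun_prop

lemma auxPhi_le_auxN (H : ℝ) (hH : H < -1) (C t : ℝ) : auxPhi H C ≤ auxN H C t := by
  unfold auxPhi auxN
  have hden : (0:ℝ) < 2 * H ^ 2 - 2 := by nlinarith
  rw [div_le_div_iff_of_pos_right hden]
  nlinarith [Real.neg_one_le_sin (2 * Real.sqrt (H ^ 2 - 1) * t),
    Real.sqrt_nonneg (4 + C ^ 2 - 4 * C * H)]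

lemma profileF_sq (H C t : ℝ) (h : 0 ≤ auxN H C t) : profileF H C t ^ 2 = auxN H C t := by
  rw [profileF_eq]; exact Real.sq_sqrt h

lemma profileR_sq (H C t : ℝ) (hC : C < 0) (h : 0 ≤ auxN H C t) :
    profileR H C t ^ 2 = auxN H C t / (-C) := by
  unfold profileR
  rw [div_pow, profileF_sq H C t h, Real.sq_sqrt (by linarith)]

lemma integrand_contAt (H : ℝ) {p : ℝ × ℝ} (hC : p.1 < 0)
    (hN : 0 < auxN H p.1 p.2) (hr : 1 < auxN H p.1 p.2 / (-p.1)) :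
    ContinuousAt (fun p : ℝ × ℝ =>
      profileR H p.1 p.2 * profileLam H p.1 p.2 / ((profileR H p.1 p.2) ^ 2 - 1)) p := by
  have hFc : Continuous fun p : ℝ × ℝ => profileF H p.1 p.2 :=
    Real.continuous_sqrt.comp (auxN_cont H)
  have hsqC : Continuous fun p : ℝ × ℝ => Real.sqrt (-p.1) := by fun_prop
  have hsqC0 : Real.sqrt (-p.1) ≠ 0 :=
    ne_of_gt (Real.sqrt_pos.mpr (by linarith))
  have hF0 : profileF H p.1 p.2 ≠ 0 := by
    rw [profileF_eq]; exact ne_of_gt (Real.sqrt_pos.mpr hN)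
  have hRc : ContinuousAt (fun p : ℝ × ℝ => profileR H p.1 p.2) p :=
    ContinuousAt.div hFc.continuousAt hsqC.continuousAt hsqC0
  have hLc : ContinuousAt (fun p : ℝ × ℝ => profileLam H p.1 p.2) p := by
    have heq : (fun p : ℝ × ℝ => profileLam H p.1 p.2)
        = fun p : ℝ × ℝ => H + ((profileF H p.1 p.2) ^ 2)⁻¹ := by
      funext p; rw [profileLam, zpow_neg_two']
    rw [heq]
    exact continuousAt_const.add
      (((hFc.pow 2).continuousAt).inv₀ (pow_ne_zero 2 hF0))
  have hden0 : (profileR H p.1 p.2) ^ 2 - 1 ≠ 0 := by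
    rw [profileR_sq H p.1 p.2 hC hN.le]; linarith
  exact (hRc.mul hLc).div ((hRc.pow 2).sub continuousAt_const) hden0

lemma Kint_continuousAt (H : ℝ) (hH : H < -1) :
    ContinuousAt (Kint H) (2 * (H + Real.sqrt (H ^ 2 - 1))) := by
  set s := Real.sqrt (H ^ 2 - 1) with hsdef
  have hs0 : 0 < s := Real.sqrt_pos.mpr (by nlinarith)
  have hs2 : s ^ 2 = H ^ 2 - 1 := Real.sq_sqrt (by nlinarith)
  have hsH : s < -H := by rw [hsdef, Real.sqrt_lt' (by linarith)]; nlinarith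
  have hA : H + s < 0 := by linarith
  set C₁ := 2 * (H + s) with hC1def
  have hC1 : C₁ < 0 := by rw [hC1def]; linarith
  have hD0 : 4 + C₁ ^ 2 - 4 * C₁ * H = 0 := by rw [hC1def]; linear_combination 4 * hs2
  have hφval : auxPhi H C₁ = s⁻¹ := by
    unfold auxPhi
    rw [hD0, Real.sqrt_zero, sub_zero,
      show 2 * H ^ 2 - 2 = 2 * s ^ 2 by nlinarith, hC1def]
    field_simp; ring
  have hφpos : 0 < auxPhi H C₁ := by rw [hφval]; positivity
  have hψ : 1 < auxPhi H C₁ / (-C₁) := by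
    rw [hφval, lt_div_iff₀ (by linarith : (0:ℝ) < -C₁), one_mul,
      show (s⁻¹ : ℝ) = 1 / s from (one_div s).symm, lt_div_iff₀ hs0, hC1def]
    nlinarith [mul_pos (neg_pos.mpr hA) (neg_pos.mpr hA)]
  -- eventual conditions
  have hev1 : ∀ᶠ C in 𝓝 C₁, C < 0 :=
    continuousAt_id.eventually_lt continuousAt_const hC1
  have hev2 : ∀ᶠ C in 𝓝 C₁, 0 < auxPhi H C :=
    continuousAt_const.eventually_lt (auxPhi_cont H).continuousAt hφpos
  have hψc : ContinuousAt (fun C : ℝ => auxPhi H C / (-C)) C₁ :=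
    ContinuousAt.div (auxPhi_cont H).continuousAt continuous_neg.continuousAt
      (by simp; linarith)
  have hev3 : ∀ᶠ C in 𝓝 C₁, 1 < auxPhi H C / (-C) :=
    continuousAt_const.eventually_lt hψc hψ
  obtain ⟨δ, hδ, hball⟩ := Metric.eventually_nhds_iff.mp ((hev1.and hev2).and hev3)
  set T := π / s with hTdef
  set G := fun p : ℝ × ℝ =>
    profileR H p.1 p.2 * profileLam H p.1 p.2 / ((profileR H p.1 p.2) ^ 2 - 1) with hGdef
  have hcond : ∀ C : ℝ, dist C C₁ < δ → ∀ t : ℝ,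
      C < 0 ∧ 0 < auxN H C t ∧ 1 < auxN H C t / (-C) := by
    intro C hCd t
    obtain ⟨⟨h1, h2⟩, h3⟩ := hball hCd
    refine ⟨h1, lt_of_lt_of_le h2 (auxPhi_le_auxN H hH C t), lt_of_lt_of_le h3 ?_⟩
    rw [div_le_div_iff_of_pos_right (by linarith : (0:ℝ) < -C)]
    exact auxPhi_le_auxN H hH C t
  have hKcomp : IsCompact (Metric.closedBall C₁ (δ/2) ×ˢ Set.uIcc (0:ℝ) T) :=
    (isCompact_closedBall _ _).prod isCompact_uIcc
  have hcontOn : ContinuousOn G (Metric.closedBall C₁ (δ/2) ×ˢ Set.uIcc (0:ℝ) T) := by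
    intro p hp
    have hd : dist p.1 C₁ < δ :=
      lt_of_le_of_lt (Metric.mem_closedBall.mp hp.1) (by linarith)
    obtain ⟨h1, h2, h3⟩ := hcond p.1 hd p.2
    exact (integrand_contAt H h1 h2 h3).continuousWithinAt
  obtain ⟨M, hM⟩ := hKcomp.exists_bound_of_continuousOn hcontOn
  have hmain : ContinuousAt (fun C => ∫ t in (0:ℝ)..T, G (C, t)) C₁ := by
    apply intervalIntegral.continuousAt_of_dominated_interval (bound := fun _ => M)
    · filter_upwards [Metric.eventually_nhds_iff.mpr ⟨δ, hδ, fun C hC => hC⟩] with C hCd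
      apply Continuous.aestronglyMeasurable
      rw [continuous_iff_continuousAt]
      intro t
      have h := hcond C hCd t
      exact (integrand_contAt H h.1 h.2.1 h.2.2).comp
        ((continuous_const.prodMk continuous_id).continuousAt)
    · filter_upwards [Metric.closedBall_mem_nhds C₁ (by linarith : (0:ℝ) < δ/2)] with C hCm
      exact Eventually.of_forall fun t ht =>
        hM (C, t) ⟨hCm, Set.uIoc_subset_uIcc ht⟩
    · exact intervalIntegrable_const
    · refine Eventually.of_forall fun t _ => ?_
      have h := hcond C₁ (by simpa using hδ) t
      exact (integrand_contAt H h.1 h.2.1 h.2.2).comp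
        ((continuous_id.prodMk continuous_const).continuousAt)
  exact hmain

lemma Kint_value (H : ℝ) (hH : H < -1) :
    Kint H (2 * (H + Real.sqrt (H ^ 2 - 1)))
      = -π * Real.sqrt (2 - 2 * H / Real.sqrt (H ^ 2 - 1)) := by
  set s := Real.sqrt (H ^ 2 - 1) with hsdef
  have hs0 : 0 < s := Real.sqrt_pos.mpr (by nlinarith)
  have hs2 : s ^ 2 = H ^ 2 - 1 := Real.sq_sqrt (by nlinarith)
  have hsH : s < -H := by rw [hsdef, Real.sqrt_lt' (by linarith)]; nlinarith
  have hA : H + s < 0 := by linarith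
  have hAmul : (H + s) * (H - s) = 1 := by linear_combination -hs2
  set C₁ := 2 * (H + s) with hC1def
  have hC1 : C₁ < 0 := by rw [hC1def]; linarith
  have hD0 : 4 + C₁ ^ 2 - 4 * C₁ * H = 0 := by rw [hC1def]; linear_combination 4 * hs2
  have hNval : ∀ t : ℝ, auxN H C₁ t = s⁻¹ := by
    intro t
    unfold auxN
    rw [← hsdef, hD0, Real.sqrt_zero, zero_mul, add_zero,
      show 2 * H ^ 2 - 2 = 2 * s ^ 2 by nlinarith]
    rw [hC1def]; field_simp; ring
  have hFval : ∀ t : ℝ, profileF H C₁ t = Real.sqrt s⁻¹ := by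
    intro t; rw [profileF_eq, hNval]
  set a := Real.sqrt s⁻¹ with hadef
  set b := Real.sqrt (-C₁) with hbdef
  have ha : 0 < a := Real.sqrt_pos.mpr (by positivity)
  have hb : 0 < b := Real.sqrt_pos.mpr (by linarith)
  have ha2 : a ^ 2 = s⁻¹ := Real.sq_sqrt (by positivity)
  have hb2 : b ^ 2 = -C₁ := Real.sq_sqrt (by linarith)
  set q := Real.sqrt (2 - 2 * H / s) with hqdef
  have hqarg : 0 < 2 - 2 * H / s := by
    have : 2 * H / s < 0 := div_neg_of_neg_of_pos (by linarith) hs0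
    linarith
  have hq : 0 < q := Real.sqrt_pos.mpr hqarg
  have hq2 : q ^ 2 = 2 - 2 * H / s := Real.sq_sqrt hqarg.le
  have h1 : a ^ 2 - b ^ 2 = (H + s) ^ 2 / s := by
    rw [ha2, hb2, hC1def]; field_simp; linear_combination hs2
  have hden : 0 < a ^ 2 - b ^ 2 := by
    rw [h1]; exact div_pos (by nlinarith) hs0
  have hRval : ∀ u : ℝ, profileR H C₁ u = a / b := by
    intro u; unfold profileR; rw [hFval]
  have hLval : ∀ u : ℝ, profileLam H C₁ u = H + s := by
    intro u; unfold profileLam; rw [hFval, zpow_neg_two', ha2, inv_inv]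
  have hconst : ∀ u : ℝ,
      profileR H C₁ u * profileLam H C₁ u / (profileR H C₁ u ^ 2 - 1)
        = a / b * (H + s) / ((a / b) ^ 2 - 1) := by
    intro u; rw [hRval, hLval]
  have hKint : Kint H C₁ = (π / s) * (a / b * (H + s) / ((a / b) ^ 2 - 1)) := by
    unfold Kint
    rw [← hsdef]
    rw [intervalIntegral.integral_congr
      (g := fun _ => a / b * (H + s) / ((a / b) ^ 2 - 1)) (fun u _ => hconst u)]
    rw [intervalIntegral.integral_const, smul_eq_mul, sub_zero]
  clear_value s C₁ a b q
  have hkey : a * (H + s) * b = -s * q * (a ^ 2 - b ^ 2) := by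
    have hx : a * (H + s) * b < 0 := by nlinarith [mul_pos ha hb]
    have hy : -s * q * (a ^ 2 - b ^ 2) < 0 := by
      nlinarith [mul_pos (mul_pos hs0 hq) hden]
    have hsq : (a * (H + s) * b) ^ 2 = (-s * q * (a ^ 2 - b ^ 2)) ^ 2 := by
      rw [show (a * (H + s) * b) ^ 2 = a ^ 2 * b ^ 2 * (H + s) ^ 2 by ring,
          show (-s * q * (a ^ 2 - b ^ 2)) ^ 2 = s ^ 2 * q ^ 2 * (a ^ 2 - b ^ 2) ^ 2 by ring,
          h1, ha2, hb2, hq2, hC1def]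
      field_simp
      linear_combination (-(H + s) ^ 3) * hs2
    have hfac : (a * (H + s) * b - -s * q * (a ^ 2 - b ^ 2)) *
        (a * (H + s) * b + -s * q * (a ^ 2 - b ^ 2)) = 0 := by linear_combination hsq
    rcases mul_eq_zero.mp hfac with h | h
    · linarith
    · linarith
  have hc : a / b * (H + s) / ((a / b) ^ 2 - 1) = -s * q := by
    have hcc : a / b * (H + s) / ((a / b) ^ 2 - 1) = a * (H + s) * b / (a ^ 2 - b ^ 2) := by
      rw [div_pow]
      rw [show a ^ 2 / b ^ 2 - 1 = (a ^ 2 - b ^ 2) / b ^ 2 by field_simp]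
      field_simp
    rw [hcc, hkey, mul_div_assoc, div_self hden.ne', mul_one]
  rw [hKint, hc]
  field_simp

theorem stmt_19 (H : ℝ) (hH : H < -1) :
    Filter.Tendsto (fun C => Kint H C)
      (nhdsWithin (2 * (H + Real.sqrt (H ^ 2 - 1)))
        (Set.Ioi (2 * (H + Real.sqrt (H ^ 2 - 1)))))
      (nhds (-π * Real.sqrt (2 - 2 * H / Real.sqrt (H ^ 2 - 1)))) ∧
    -π * Real.sqrt (2 - 2 * H / Real.sqrt (H ^ 2 - 1)) < -2 * π := by
  constructor
  · have hcont := Kint_continuousAt H hH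
    have ht : Filter.Tendsto (Kint H)
        (nhdsWithin (2 * (H + Real.sqrt (H ^ 2 - 1)))
          (Set.Ioi (2 * (H + Real.sqrt (H ^ 2 - 1)))))
        (nhds (Kint H (2 * (H + Real.sqrt (H ^ 2 - 1))))) :=
      hcont.tendsto.mono_left nhdsWithin_le_nhds
    rw [Kint_value H hH] at ht
    exact ht
  · set s := Real.sqrt (H ^ 2 - 1) with hs
    have hs0 : 0 < s := Real.sqrt_pos.mpr (by nlinarith)
    have hs2 : s ^ 2 = H ^ 2 - 1 := Real.sq_sqrt (by nlinarith)
    have hsH : s < -H := by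
      rw [hs, Real.sqrt_lt' (by linarith)]; nlinarith
    have h4 : (2:ℝ) < Real.sqrt (2 - 2 * H / s) := by
      rw [Real.lt_sqrt (by norm_num)]
      have h5 : 2 * H / s < -2 := by rw [div_lt_iff₀ hs0]; nlinarith
      linarith
    nlinarith [pi_pos]
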